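/- There exist 4×4 complex matrices π⁰ and π¹ forming a projective measurement (π⁰ and π¹ are orthogonal projections, i.e., Hermitian idempotents, with π⁰ + π¹ = 1) such that (1/4) · Σ_{H : Fin 2 → Fin 2} ‖ (π^{H 0} ⊗ π^{H 0}) · (O_H ⊗ O_H) · ψ ‖² = 9/16, where the sum runs over all four functions H : Fin 2 → Fin 2; moreover, the simultaneous query-extraction probability vanishes: (R ⊗ R) ψ = 0, where R = e_{(0,0)} e_{(0,0)}† + e_{(0,1)} e_{(0,1)}† is the orthogonal projection of ℂ^4 onto the states whose first (query-input) qubit equals 0. In words: two non-communicating parties sharing ψ, each making a single query to a uniformly random oracle H : {0,1} → {0,1}, can simultaneously output H(0) with probability 9/16 > 1/2, yet measuring the query-input registers of both parties never simultaneously yields the input 0; hence the constant 9 in the simultaneous one-way-to-hiding lemma cannot be improved below 9/8. -/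

import Mathlib

open Matrix Kronecker

/-- Standard basis vector `e_{(x,y)}` of the two-qubit space `ℂ^4 = ℂ^{Fin 2 × Fin 2}`. -/
def e2 (x y : Fin 2) : Fin 2 × Fin 2 → ℂ :=
  fun p => if p = (x, y) then 1 else 0

/-- The oracle unitary `O_H`, determined by `O_H e_{(x,y)} = e_{(x, y + H x)}`. -/
def oracleU (H : Fin 2 → Fin 2) : Matrix (Fin 2 × Fin 2) (Fin 2 × Fin 2) ℂ :=
  fun p q => if p.1 = q.1 ∧ p.2 = q.2 + H q.1 then 1 else 0

/-- The vector `u = |1⟩⊗|+⟩ = (e_{(1,0)} + e_{(1,1)})/√2`. -/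
noncomputable def uVec : Fin 2 × Fin 2 → ℂ :=
  fun p => (e2 1 0 p + e2 1 1 p) / ((Real.sqrt 2 : ℝ) : ℂ)

/-- Kronecker (tensor) product of two vectors in `ℂ^4`. -/
def tensVec (v w : Fin 2 × Fin 2 → ℂ) : (Fin 2 × Fin 2) × (Fin 2 × Fin 2) → ℂ :=
  fun p => v p.1 * w p.2

/-- The shared state `ψ = (1/√2)(e_{(0,0)} ⊗ u + u ⊗ e_{(0,0)})`. -/
noncomputable def psiVec : (Fin 2 × Fin 2) × (Fin 2 × Fin 2) → ℂ :=
  ((1 / (Real.sqrt 2 : ℝ) : ℝ) : ℂ) • (tensVec (e2 0 0) uVec + tensVec uVec (e2 0 0))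

/-- The projection `R = e_{(0,0)}e_{(0,0)}† + e_{(0,1)}e_{(0,1)}†` onto the states whose
query-input qubit equals `0`. -/
def extractR : Matrix (Fin 2 × Fin 2) (Fin 2 × Fin 2) ℂ :=
  Matrix.vecMulVec (e2 0 0) (star (e2 0 0)) + Matrix.vecMulVec (e2 0 1) (star (e2 0 1))

/- ### Auxiliary definitions for the counterexample -/

/-- `gg = √6/8`, the off-diagonal coefficient of the measurement projectors. -/
noncomputable def gg : ℝ := Real.sqrt 2 * Real.sqrt 3 / 8

lemma hggR : gg ^ 2 = 3 / 32 := by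
  have h2 : Real.sqrt 2 ^ 2 = 2 := Real.sq_sqrt (by norm_num)
  have h3 : Real.sqrt 3 ^ 2 = 3 := Real.sq_sqrt (by norm_num)
  simp only [gg]; rw [div_pow, mul_pow, h2, h3]; norm_num

/-- The measurement projectors `π⁰, π¹`. -/
noncomputable def pimDef : Fin 2 → Matrix (Fin 2 × Fin 2) (Fin 2 × Fin 2) ℂ :=
  fun b p q =>
    if b = 0 then
      if p = ((0 : Fin 2), (0 : Fin 2)) ∧ q = (0, 0) then 1
      else if p = (0, 1) ∧ q = (0, 1) then 1/4
      else if (p = (0, 1) ∧ q.1 = 1) ∨ (q = (0, 1) ∧ p.1 = 1) then (gg : ℂ)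
      else if p.1 = 1 ∧ q.1 = 1 then 3/8 else 0
    else
      if p = ((0 : Fin 2), (1 : Fin 2)) ∧ q = (0, 1) then 3/4
      else if (p = (0, 1) ∧ q.1 = 1) ∨ (q = (0, 1) ∧ p.1 = 1) then -(gg : ℂ)
      else if p.1 = 1 ∧ q.1 = 1 then (if p = q then 5/8 else -(3/8)) else 0

lemma pim_herm : ∀ b, (pimDef b)ᴴ = pimDef b := by
  intro b
  ext ⟨p1, p2⟩ ⟨q1, q2⟩
  fin_cases b <;> fin_cases p1 <;> fin_cases p2 <;> fin_cases q1 <;> fin_cases q2 <;>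
    simp [pimDef, Prod.ext_iff, Matrix.conjTranspose_apply]

lemma pim_idem : ∀ b, pimDef b * pimDef b = pimDef b := by
  have hgg2 : (gg : ℂ) ^ 2 = 3 / 32 := by
    rw [show ((3 : ℂ)/32) = ((3/32 : ℝ) : ℂ) by norm_num, ← hggR]; push_cast; ring
  intro b
  ext ⟨p1, p2⟩ ⟨q1, q2⟩
  simp only [Matrix.mul_apply, Fintype.sum_prod_type, Fin.sum_univ_two]
  fin_cases b <;> fin_cases p1 <;> fin_cases p2 <;> fin_cases q1 <;> fin_cases q2 <;>
    simp [pimDef, Prod.ext_iff] <;> ring_nf <;> simp [hgg2] <;> ring_nf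

lemma pim_sum : pimDef 0 + pimDef 1 = 1 := by
  ext ⟨p1, p2⟩ ⟨q1, q2⟩
  fin_cases p1 <;> fin_cases p2 <;> fin_cases q1 <;> fin_cases q2 <;>
    simp [pimDef, Prod.ext_iff, Matrix.one_apply] <;> norm_num

/-- Kronecker product acts factorwise on tensor-product vectors. -/
lemma kron_mulVec (A B : Matrix (Fin 2 × Fin 2) (Fin 2 × Fin 2) ℂ) (v w : Fin 2 × Fin 2 → ℂ) :
    (A ⊗ₖ B) *ᵥ tensVec v w = tensVec (A *ᵥ v) (B *ᵥ w) := by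
  ext ⟨p, q⟩
  simp only [Matrix.mulVec, dotProduct, tensVec, kroneckerMap_apply]
  rw [Fintype.sum_prod_type, Finset.sum_mul_sum]
  exact Finset.sum_congr rfl fun r _ => Finset.sum_congr rfl fun s _ => by ring

lemma oracle_e00 (H : Fin 2 → Fin 2) : oracleU H *ᵥ e2 0 0 = e2 0 (H 0) := by
  have h0 : H 0 = 0 ∨ H 0 = 1 := by omega
  ext ⟨p, q⟩
  simp only [Matrix.mulVec, dotProduct, oracleU, e2, Fintype.sum_prod_type,
    Fin.sum_univ_two]
  rcases h0 with h | h <;>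
    fin_cases p <;> fin_cases q <;> simp [h, Prod.ext_iff]

lemma oracle_u (H : Fin 2 → Fin 2) : oracleU H *ᵥ uVec = uVec := by
  have h1 : H 1 = 0 ∨ H 1 = 1 := by omega
  ext ⟨p, q⟩
  simp only [Matrix.mulVec, dotProduct, oracleU, uVec, e2, Fintype.sum_prod_type,
    Fin.sum_univ_two]
  rcases h1 with h | h <;>
    fin_cases p <;> fin_cases q <;> simp [h, Prod.ext_iff]

/-- Coordinates of `π_b e_{(0,b)}`. -/
noncomputable def aR : Fin 2 → Fin 2 × Fin 2 → ℝ := fun b p =>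
  if b = 0 then (if p = (0, 0) then 1 else 0)
  else (if p = (0, 1) then 3/4 else if p.1 = 1 then -gg else 0)

/-- Coordinates of `√2 · π_b u`. -/
noncomputable def dR : Fin 2 → Fin 2 × Fin 2 → ℝ := fun b p =>
  if b = 0 then (if p = (0, 1) then 2*gg else if p.1 = 1 then 3/4 else 0)
  else (if p = (0, 1) then -(2*gg) else if p.1 = 1 then 1/4 else 0)

lemma colA (b : Fin 2) : pimDef b *ᵥ e2 0 b = fun p => ((aR b p : ℝ) : ℂ) := by
  ext ⟨p1, p2⟩
  simp only [Matrix.mulVec, dotProduct, Fintype.sum_prod_type, Fin.sum_univ_two]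
  fin_cases b <;> fin_cases p1 <;> fin_cases p2 <;>
    simp [pimDef, aR, e2, Prod.ext_iff]

lemma colD (b : Fin 2) :
    pimDef b *ᵥ uVec = fun p => (((Real.sqrt 2)⁻¹ : ℝ) : ℂ) * ((dR b p : ℝ) : ℂ) := by
  ext ⟨p1, p2⟩
  simp only [Matrix.mulVec, dotProduct, Fintype.sum_prod_type, Fin.sum_univ_two]
  fin_cases b <;> fin_cases p1 <;> fin_cases p2 <;>
    simp [pimDef, dR, uVec, e2, Prod.ext_iff, div_eq_mul_inv] <;> ring

/-- Explicit coordinates of the post-query, post-measurement (unnormalised) state. -/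
lemma vecForm (H : Fin 2 → Fin 2) :
    (((pimDef (H 0) ⊗ₖ pimDef (H 0)) * (oracleU H ⊗ₖ oracleU H)) *ᵥ psiVec) =
      fun p => ((1/2 * (aR (H 0) p.1 * dR (H 0) p.2 + dR (H 0) p.1 * aR (H 0) p.2) : ℝ) : ℂ) := by
  rw [← Matrix.mul_kronecker_mul, psiVec, Matrix.mulVec_smul, Matrix.mulVec_add,
    kron_mulVec, kron_mulVec, ← Matrix.mulVec_mulVec, ← Matrix.mulVec_mulVec,
    oracle_e00, oracle_u, colA, colD]
  have h2 : ((Real.sqrt 2 : ℝ) : ℂ) * ((Real.sqrt 2 : ℝ) : ℂ) = 2 := by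
    rw [← Complex.ofReal_mul, Real.mul_self_sqrt (by norm_num)]; norm_num
  have hne : ((Real.sqrt 2 : ℝ) : ℂ) ≠ 0 := by
    simpa using (Real.sqrt_pos.mpr (by norm_num : (0:ℝ) < 2)).ne'
  funext p
  simp only [tensVec, Pi.smul_apply, Pi.add_apply, smul_eq_mul]
  push_cast
  field_simp
  ring_nf
  rw [show ((Real.sqrt 2 : ℝ) : ℂ)^2 = 2 by rw [sq]; exact h2]

/-- Value of the squared norm for each branch. -/
lemma sumSq (b : Fin 2) :
    ∑ p : (Fin 2 × Fin 2) × (Fin 2 × Fin 2), Complex.normSq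
      (((1/2 * (aR b p.1 * dR b p.2 + dR b p.1 * aR b p.2) : ℝ) : ℂ))
      = if b = 0 then (3/4 : ℝ) else 3/8 := by
  have hg4 : gg ^ 4 = 9/1024 := by rw [show gg^4 = (gg^2)^2 by ring, hggR]; norm_num
  simp only [Complex.normSq_ofReal, Fintype.sum_prod_type, Fin.sum_univ_two]
  fin_cases b <;> simp [aR, dR, Prod.ext_iff] <;> ring_nf <;>
    simp [hggR, hg4] <;> norm_num

lemma R_e00 : extractR *ᵥ e2 0 0 = e2 0 0 := by
  ext ⟨p1, p2⟩
  simp only [extractR, Matrix.mulVec, dotProduct, Matrix.add_apply,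
    Matrix.vecMulVec_apply, Pi.star_apply, e2, Fintype.sum_prod_type, Fin.sum_univ_two]
  fin_cases p1 <;> fin_cases p2 <;> simp [Prod.ext_iff]

lemma R_u : extractR *ᵥ uVec = 0 := by
  ext ⟨p1, p2⟩
  simp only [extractR, Matrix.mulVec, dotProduct, Matrix.add_apply,
    Matrix.vecMulVec_apply, Pi.star_apply, e2, uVec, Fintype.sum_prod_type, Fin.sum_univ_two]
  fin_cases p1 <;> fin_cases p2 <;> simp [Prod.ext_iff]

lemma tensVec_zero_right (v : Fin 2 × Fin 2 → ℂ) : tensVec v 0 = 0 := by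
  funext p; simp [tensVec]

lemma tensVec_zero_left (v : Fin 2 × Fin 2 → ℂ) : tensVec 0 v = 0 := by
  funext p; simp [tensVec]

/-- Counter-example for the simultaneous O2H lemma: there is a projective measurement
`{π⁰, π¹}` such that, averaging over the four oracles `H : Fin 2 → Fin 2`, both parties
simultaneously output `H(0)` with probability exactly `9/16 > 1/2`, while the simultaneous
query-extraction probability vanishes: `(R ⊗ R) ψ = 0`. -/
theorem simultaneous_O2H_counterexample :
    ∃ pim : Fin 2 → Matrix (Fin 2 × Fin 2) (Fin 2 × Fin 2) ℂ,
      (∀ b, (pim b)ᴴ = pim b) ∧ (∀ b, pim b * pim b = pim b) ∧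
      pim 0 + pim 1 = 1 ∧
      (1 / 4 : ℝ) * ∑ H : Fin 2 → Fin 2,
          (∑ p, Complex.normSq
            ((((pim (H 0) ⊗ₖ pim (H 0)) * (oracleU H ⊗ₖ oracleU H)) *ᵥ psiVec) p)) = 9 / 16 ∧
      (extractR ⊗ₖ extractR) *ᵥ psiVec = 0 := by
  refine ⟨pimDef, pim_herm, pim_idem, pim_sum, ?_, ?_⟩
  · have hS : ∀ H : Fin 2 → Fin 2,
        (∑ p, Complex.normSq
          ((((pimDef (H 0) ⊗ₖ pimDef (H 0)) * (oracleU H ⊗ₖ oracleU H)) *ᵥ psiVec) p))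
        = if H 0 = 0 then (3/4 : ℝ) else 3/8 := by
      intro H
      rw [vecForm H, sumSq (H 0)]
    rw [Finset.sum_congr rfl fun H _ => hS H]
    rw [← Equiv.sum_comp (piFinTwoEquiv fun _ => Fin 2).symm]
    rw [Fintype.sum_prod_type]
    simp [Fin.sum_univ_two]
    norm_num
  · rw [psiVec, Matrix.mulVec_smul, Matrix.mulVec_add, kron_mulVec, kron_mulVec,
      R_e00, R_u, tensVec_zero_right, tensVec_zero_left]
    simp
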